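/- Let P ⊂ ℝ² be a plane convex body with respect to which the standard basis is reduced, i.e., w = w_{(1,0)}(P) ≤ h = w_{(0,1)}(P) and w_{(1,1)}(P) ≥ h, w_{(1,-1)}(P) ≥ h. Let P′ be the image of P under the linear map (x,y) ↦ (x, (w/h)·y). Then w_{(1,0)}(P′) = w_{(0,1)}(P′) = w and w_{(1,1)}(P′) ≥ w, w_{(1,-1)}(P′) ≥ w; in particular the standard basis is reduced with respect to P′. -/

import Mathlib

open Set MeasureTheory Pointwise

/-- A plane convex body: a compact convex subset of ℝ² with nonempty interior. -/
def IsPlaneConvexBody (P : Set (Fin 2 → ℝ)) : Prop :=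
  IsCompact P ∧ Convex ℝ P ∧ (interior P).Nonempty

/-- The width of `P` in the direction `u`. -/
noncomputable def width (P : Set (Fin 2 → ℝ)) (u : Fin 2 → ℝ) : ℝ :=
  sSup ((fun p => u 0 * p 0 + u 1 * p 1) '' P) -
    sInf ((fun p => u 0 * p 0 + u 1 * p 1) '' P)

/-- An affine unimodular transformation: multiplication by an integer matrix with
determinant `±1` followed by a translation by an integer vector. -/
def IsUnimodularMap (φ : (Fin 2 → ℝ) → (Fin 2 → ℝ)) : Prop :=
  ∃ (A : Matrix (Fin 2) (Fin 2) ℤ) (t : Fin 2 → ℤ),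
    (A.det = 1 ∨ A.det = -1) ∧
    ∀ x, φ x = (A.map (Int.cast : ℤ → ℝ)).mulVec x + fun i => (t i : ℝ)

/-- Two subsets of ℝ² are lattice-equivalent if one is the image of the other
under an affine unimodular transformation. -/
def LatticeEquivalent (P Q : Set (Fin 2 → ℝ)) : Prop :=
  ∃ φ, IsUnimodularMap φ ∧ Q = φ '' P

/-- The `l`-dilate of the unit square, `[0,l]²`. -/
def squareDilate (l : ℝ) : Set (Fin 2 → ℝ) :=
  {x | ∀ i, x i ∈ Set.Icc 0 l}

/-- The `l`-dilate of the standard 2-simplex. -/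
def simplexDilate (l : ℝ) : Set (Fin 2 → ℝ) :=
  {x | 0 ≤ x 0 ∧ 0 ≤ x 1 ∧ x 0 + x 1 ≤ l}

/-- The lattice size of `P` with respect to the unit square. -/
noncomputable def lsSquare (P : Set (Fin 2 → ℝ)) : ℝ :=
  sInf {l : ℝ | 0 ≤ l ∧ ∃ φ, IsUnimodularMap φ ∧ φ '' P ⊆ squareDilate l}

/-- The lattice size of `P` with respect to the standard simplex. -/
noncomputable def lsDelta (P : Set (Fin 2 → ℝ)) : ℝ :=
  sInf {l : ℝ | 0 ≤ l ∧ ∃ φ, IsUnimodularMap φ ∧ φ '' P ⊆ simplexDilate l}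

/-- The lattice width of `P`: the minimum of `width P u` over primitive integer
directions `u`. -/
noncomputable def latticeWidth (P : Set (Fin 2 → ℝ)) : ℝ :=
  sInf {w : ℝ | ∃ u : Fin 2 → ℤ, Int.gcd (u 0) (u 1) = 1 ∧
    w = width P (fun i => (u i : ℝ))}

/-- A lattice polygon: the convex hull of a (nonempty) finite set of points of ℤ². -/
def IsLatticePolygon (P : Set (Fin 2 → ℝ)) : Prop :=
  ∃ S : Finset (Fin 2 → ℤ), S.Nonempty ∧
    P = convexHull ℝ ((fun p : Fin 2 → ℤ => fun i => (p i : ℝ)) '' (S : Set (Fin 2 → ℤ)))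

/-- The area of a plane set: its two-dimensional Lebesgue measure. -/
noncomputable def area (P : Set (Fin 2 → ℝ)) : ℝ :=
  (volume P).toReal

private lemma contF18 (u : Fin 2 → ℝ) :
    Continuous (fun p : Fin 2 → ℝ => u 0 * p 0 + u 1 * p 1) :=
  (continuous_const.mul (continuous_apply 0)).add (continuous_const.mul (continuous_apply 1))

private lemma width_nonneg18 {P : Set (Fin 2 → ℝ)} (hc : IsCompact P) (hne : P.Nonempty)
    (u : Fin 2 → ℝ) : 0 ≤ width P u := by
  have h1 := hc.image (contF18 u)
  have h2 : sInf ((fun p : Fin 2 → ℝ => u 0 * p 0 + u 1 * p 1) '' P) ≤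
      sSup ((fun p : Fin 2 → ℝ => u 0 * p 0 + u 1 * p 1) '' P) :=
    csInf_le_csSup (hne.image _) h1.bddBelow h1.bddAbove
  unfold width; linarith

private lemma width_le_add18 {P : Set (Fin 2 → ℝ)} (hc : IsCompact P) (hne : P.Nonempty)
    (u v s : Fin 2 → ℝ) (h0 : s 0 = u 0 + v 0) (h1 : s 1 = u 1 + v 1) :
    width P s ≤ width P u + width P v := by
  have hu := hc.image (contF18 u)
  have hv := hc.image (contF18 v)
  have hsup : sSup ((fun p : Fin 2 → ℝ => s 0 * p 0 + s 1 * p 1) '' P) ≤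
      sSup ((fun p : Fin 2 → ℝ => u 0 * p 0 + u 1 * p 1) '' P) +
      sSup ((fun p : Fin 2 → ℝ => v 0 * p 0 + v 1 * p 1) '' P) := by
    apply csSup_le (hne.image _)
    rintro x ⟨p, hp, rfl⟩
    have h3 : u 0 * p 0 + u 1 * p 1 ≤
        sSup ((fun p : Fin 2 → ℝ => u 0 * p 0 + u 1 * p 1) '' P) :=
      le_csSup hu.bddAbove ⟨p, hp, rfl⟩
    have h4 : v 0 * p 0 + v 1 * p 1 ≤
        sSup ((fun p : Fin 2 → ℝ => v 0 * p 0 + v 1 * p 1) '' P) :=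
      le_csSup hv.bddAbove ⟨p, hp, rfl⟩
    have : s 0 * p 0 + s 1 * p 1 =
        (u 0 * p 0 + u 1 * p 1) + (v 0 * p 0 + v 1 * p 1) := by rw [h0, h1]; ring
    dsimp only
    linarith
  have hinf : sInf ((fun p : Fin 2 → ℝ => u 0 * p 0 + u 1 * p 1) '' P) +
      sInf ((fun p : Fin 2 → ℝ => v 0 * p 0 + v 1 * p 1) '' P) ≤
      sInf ((fun p : Fin 2 → ℝ => s 0 * p 0 + s 1 * p 1) '' P) := by
    apply le_csInf (hne.image _)
    rintro x ⟨p, hp, rfl⟩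
    have h3 : sInf ((fun p : Fin 2 → ℝ => u 0 * p 0 + u 1 * p 1) '' P) ≤
        u 0 * p 0 + u 1 * p 1 := csInf_le hu.bddBelow ⟨p, hp, rfl⟩
    have h4 : sInf ((fun p : Fin 2 → ℝ => v 0 * p 0 + v 1 * p 1) '' P) ≤
        v 0 * p 0 + v 1 * p 1 := csInf_le hv.bddBelow ⟨p, hp, rfl⟩
    have : s 0 * p 0 + s 1 * p 1 =
        (u 0 * p 0 + u 1 * p 1) + (v 0 * p 0 + v 1 * p 1) := by rw [h0, h1]; ring
    dsimp only
    linarith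
  unfold width; linarith

private lemma width_smul18 {P : Set (Fin 2 → ℝ)} (c : ℝ) (hcnn : 0 ≤ c)
    (u s : Fin 2 → ℝ) (h0 : s 0 = c * u 0) (h1 : s 1 = c * u 1) :
    width P s = c * width P u := by
  have himg : (fun p : Fin 2 → ℝ => s 0 * p 0 + s 1 * p 1) '' P =
      c • ((fun p : Fin 2 → ℝ => u 0 * p 0 + u 1 * p 1) '' P) := by
    rw [← Set.image_smul, Set.image_image]
    apply Set.image_congr
    intro p _
    simp only [smul_eq_mul, h0, h1]; ring
  unfold width
  rw [himg, Real.sSup_smul_of_nonneg hcnn, Real.sInf_smul_of_nonneg hcnn,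
    smul_eq_mul, smul_eq_mul]
  ring

private lemma width_neg18 {P : Set (Fin 2 → ℝ)} (u s : Fin 2 → ℝ)
    (h0 : s 0 = -u 0) (h1 : s 1 = -u 1) : width P s = width P u := by
  have himg : (fun p : Fin 2 → ℝ => s 0 * p 0 + s 1 * p 1) '' P =
      -((fun p : Fin 2 → ℝ => u 0 * p 0 + u 1 * p 1) '' P) := by
    rw [← Set.image_neg_eq_neg, Set.image_image]
    apply Set.image_congr
    intro p _
    rw [h0, h1]; ring
  have hSup : ∀ S : Set ℝ, sSup (-S) = -sInf S := by
    intro S; rw [Real.sInf_def, neg_neg]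
  have hInf : ∀ S : Set ℝ, sInf (-S) = -sSup S := by
    intro S; rw [Real.sInf_def, neg_neg]
  unfold width
  rw [himg, hSup, hInf]
  ring

private lemma hpos18 {P : Set (Fin 2 → ℝ)} (hc : IsCompact P)
    (hint : (interior P).Nonempty) : 0 < width P ![0, 1] := by
  obtain ⟨x, hx⟩ := hint
  obtain ⟨ε, hε, hball⟩ := Metric.isOpen_iff.1 isOpen_interior x hx
  set e : Fin 2 → ℝ := fun i => if i = 1 then 1 else 0 with he
  set y : Fin 2 → ℝ := x + (ε / 2) • e with hy
  have hey : y - x = (ε / 2) • e := by rw [hy]; abel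
  have hnorm : ‖(ε / 2) • e‖ ≤ ε / 2 := by
    rw [norm_smul]
    have h1 : ‖e‖ ≤ 1 := by
      apply pi_norm_le_iff_of_nonneg zero_le_one |>.2
      intro i
      rw [he]
      by_cases hi : i = 1 <;> simp [hi]
    have h2 : ‖(ε / 2 : ℝ)‖ = ε / 2 := by
      rw [Real.norm_eq_abs, abs_of_pos (by linarith)]
    nlinarith [norm_nonneg e, norm_nonneg (ε / 2 : ℝ)]
  have hymem : y ∈ P := by
    apply interior_subset
    apply hball
    rw [Metric.mem_ball, dist_eq_norm, hey]
    linarith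
  have hxmem : x ∈ P := interior_subset hx
  have hbd := hc.image (contF18 ![0, 1])
  have hne : ((fun p : Fin 2 → ℝ => (![0, 1] : Fin 2 → ℝ) 0 * p 0 +
      (![0, 1] : Fin 2 → ℝ) 1 * p 1) '' P).Nonempty := ⟨_, ⟨x, hxmem, rfl⟩⟩
  have hylev : (![0, 1] : Fin 2 → ℝ) 0 * y 0 + (![0, 1] : Fin 2 → ℝ) 1 * y 1 ≤
      sSup ((fun p : Fin 2 → ℝ => (![0, 1] : Fin 2 → ℝ) 0 * p 0 +
        (![0, 1] : Fin 2 → ℝ) 1 * p 1) '' P) :=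
    le_csSup hbd.bddAbove ⟨y, hymem, rfl⟩
  have hxlev : sInf ((fun p : Fin 2 → ℝ => (![0, 1] : Fin 2 → ℝ) 0 * p 0 +
      (![0, 1] : Fin 2 → ℝ) 1 * p 1) '' P) ≤
      (![0, 1] : Fin 2 → ℝ) 0 * x 0 + (![0, 1] : Fin 2 → ℝ) 1 * x 1 :=
    csInf_le hbd.bddBelow ⟨x, hxmem, rfl⟩
  have hy1 : y 1 = x 1 + ε / 2 := by
    rw [hy, he]; simp
  unfold width
  simp only [Matrix.cons_val_zero, Matrix.cons_val_one, Matrix.head_cons] at *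
  rw [hy1] at hylev
  linarith

private lemma width_img18 (P : Set (Fin 2 → ℝ)) (c u0 u1 : ℝ) :
    width ((fun p : Fin 2 → ℝ => ![p 0, c * p 1]) '' P) ![u0, u1] =
    width P ![u0, u1 * c] := by
  have himg : (fun p : Fin 2 → ℝ => (![u0, u1] : Fin 2 → ℝ) 0 * p 0 +
      (![u0, u1] : Fin 2 → ℝ) 1 * p 1) '' ((fun p : Fin 2 → ℝ => ![p 0, c * p 1]) '' P) =
      (fun p : Fin 2 → ℝ => (![u0, u1 * c] : Fin 2 → ℝ) 0 * p 0 +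
      (![u0, u1 * c] : Fin 2 → ℝ) 1 * p 1) '' P := by
    rw [Set.image_image]
    apply Set.image_congr
    intro p _
    simp only [Matrix.cons_val_zero, Matrix.cons_val_one, Matrix.head_cons]
    ring
  unfold width
  rw [himg]

/-- If the standard basis is reduced with respect to a plane convex body `P` with
`w = w_{(1,0)}(P) ≤ h = w_{(0,1)}(P)`, then the standard basis is reduced with respect to
the image `P'` of `P` under `(x,y) ↦ (x, (w/h)·y)`, and `P'` has widths `w` in both
coordinate directions and widths at least `w` in the directions `(1,±1)`. -/
theorem stmt18 (P : Set (Fin 2 → ℝ)) (hP : IsPlaneConvexBody P) (w h : ℝ)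
    (hw : width P ![1, 0] = w) (hh : width P ![0, 1] = h) (hwh : w ≤ h)
    (h11 : (h : ℝ) ≤ width P ![1, 1]) (h1m1 : (h : ℝ) ≤ width P ![1, -1]) :
    width ((fun p : Fin 2 → ℝ => ![p 0, w / h * p 1]) '' P) ![1, 0] = w ∧
    width ((fun p : Fin 2 → ℝ => ![p 0, w / h * p 1]) '' P) ![0, 1] = w ∧
    w ≤ width ((fun p : Fin 2 → ℝ => ![p 0, w / h * p 1]) '' P) ![1, 1] ∧
    w ≤ width ((fun p : Fin 2 → ℝ => ![p 0, w / h * p 1]) '' P) ![1, -1] := by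
  obtain ⟨hcomp, hconv, hint⟩ := hP
  have hne : P.Nonempty := hint.mono interior_subset
  have hpos : 0 < h := hh ▸ hpos18 hcomp hint
  have hwnn : 0 ≤ w := hw ▸ width_nonneg18 hcomp hne _
  set c := w / h with hc
  have hc0 : 0 ≤ c := div_nonneg hwnn hpos.le
  have hc1 : c ≤ 1 := (div_le_one hpos).2 hwh
  have hch : c * h = w := div_mul_cancel₀ w hpos.ne'
  have hzero : width P ![1, 0 * c] = w := by
    rw [show (0 : ℝ) * c = 0 by ring]; exact hw
  have hwid01 : width P ![0, 1 * c] = w := by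
    rw [show (1 : ℝ) * c = c by ring]
    have := width_smul18 (P := P) c hc0 ![0, 1] ![0, c] (by simp only [Matrix.cons_val_zero, Matrix.cons_val_one, Matrix.head_cons]; ring) (by simp only [Matrix.cons_val_zero, Matrix.cons_val_one, Matrix.head_cons]; ring)
    rw [this, hh, hch]
  have hwid1c : w ≤ width P ![1, 1 * c] := by
    rw [show (1 : ℝ) * c = c by ring]
    have htri := width_le_add18 hcomp hne ![1, c] ![0, 1 - c] ![1, 1]
      (by simp only [Matrix.cons_val_zero, Matrix.cons_val_one, Matrix.head_cons]; ring) (by simp only [Matrix.cons_val_zero, Matrix.cons_val_one, Matrix.head_cons]; ring)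
    have hsc : width P ![0, 1 - c] = (1 - c) * h := by
      have := width_smul18 (P := P) (1 - c) (by linarith) ![0, 1] ![0, 1 - c]
        (by simp only [Matrix.cons_val_zero, Matrix.cons_val_one, Matrix.head_cons]; ring) (by simp only [Matrix.cons_val_zero, Matrix.cons_val_one, Matrix.head_cons]; ring)
      rw [this, hh]
    rw [hsc] at htri
    nlinarith
  have hwid1mc : w ≤ width P ![1, -1 * c] := by
    have htri := width_le_add18 hcomp hne ![1, -1 * c] ![0, c - 1] ![1, -1]
      (by simp only [Matrix.cons_val_zero, Matrix.cons_val_one, Matrix.head_cons]; ring) (by simp only [Matrix.cons_val_zero, Matrix.cons_val_one, Matrix.head_cons]; ring)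
    have hsc : width P ![0, c - 1] = (1 - c) * h := by
      have hneg : width P ![0, -1] = width P ![0, 1] :=
        width_neg18 ![0, 1] ![0, -1] (by norm_num) (by norm_num)
      have := width_smul18 (P := P) (1 - c) (by linarith) ![0, -1] ![0, c - 1]
        (by simp only [Matrix.cons_val_zero, Matrix.cons_val_one, Matrix.head_cons]; ring) (by simp only [Matrix.cons_val_zero, Matrix.cons_val_one, Matrix.head_cons]; ring)
      rw [this, hneg, hh]
    rw [hsc] at htri
    nlinarith
  exact ⟨by rw [width_img18]; exact hzero,
    by rw [width_img18]; exact hwid01,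
    by rw [width_img18]; exact hwid1c,
    by rw [width_img18]; exact hwid1mc⟩
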